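/- Every point (x,y) ∈ Δ with both coordinates rational belongs to ∂Δ ∪ ⋃_{n≥1} ⋃_{k_1,…,k_n ≥ 1} H_{k_1}∘H_{k_2}∘⋯∘H_{k_n}(∂Δ), where ∂Δ denotes the boundary of the triangle Δ and the union is over all n ≥ 1 and all finite sequences of positive integers k_1, …, k_n. -/

import Mathlib

/-- The unit simplex `Δ = {(u,v) : u ≥ 0, v ≥ 0, u+v ≤ 1}`. -/
def Delta : Set (ℝ × ℝ) := {p | 0 ≤ p.1 ∧ 0 ≤ p.2 ∧ p.1 + p.2 ≤ 1}

/-- The map `H_k(u,v) = (v, 1-v)/D_k` where `D_k = k(1-v) + 1 - u`. -/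
noncomputable def Hmap (k : ℕ) (p : ℝ × ℝ) : ℝ × ℝ :=
  (p.2 / ((k : ℝ) * (1 - p.2) + 1 - p.1), (1 - p.2) / ((k : ℝ) * (1 - p.2) + 1 - p.1))

/-- `Hcomp k n = H_{k 1} ∘ H_{k 2} ∘ ⋯ ∘ H_{k n}`. -/
noncomputable def Hcomp (k : ℕ → ℕ) : ℕ → (ℝ × ℝ) → (ℝ × ℝ)
  | 0 => id
  | n + 1 => Hcomp k n ∘ Hmap (k (n + 1))

lemma isClosed_Delta : IsClosed Delta := by
  have h : Delta = {p : ℝ × ℝ | 0 ≤ p.1} ∩ ({p | 0 ≤ p.2} ∩ {p | p.1 + p.2 ≤ 1}) := rfl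
  rw [h]
  exact (isClosed_le continuous_const continuous_fst).inter
    ((isClosed_le continuous_const continuous_snd).inter
      (isClosed_le (continuous_fst.add continuous_snd) continuous_const))

lemma mem_frontier_Delta (p : ℝ × ℝ) (hp : p ∈ Delta)
    (h : p.1 = 0 ∨ p.2 = 0 ∨ p.1 + p.2 = 1) : p ∈ frontier Delta := by
  rw [frontier, isClosed_Delta.closure_eq]
  refine ⟨hp, fun hint => ?_⟩
  rw [mem_interior_iff_mem_nhds, Metric.mem_nhds_iff] at hint
  obtain ⟨ε, hε, hball⟩ := hint
  rcases h with h | h | h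
  · have hmem : ((p.1 - ε/2, p.2) : ℝ × ℝ) ∈ Delta := by
      apply hball
      rw [Metric.mem_ball, Prod.dist_eq]
      have h1 : dist (p.1 - ε/2) p.1 = ε/2 := by
        rw [Real.dist_eq, abs_of_nonpos] <;> linarith
      have h2 : dist p.2 p.2 = 0 := dist_self _
      show max (dist (p.1 - ε/2) p.1) (dist p.2 p.2) < ε
      rw [h1, h2]
      exact max_lt (by linarith) hε
    have := hmem.1; simp only at this; linarith
  · have hmem : ((p.1, p.2 - ε/2) : ℝ × ℝ) ∈ Delta := by
      apply hball
      rw [Metric.mem_ball, Prod.dist_eq]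
      have h1 : dist (p.2 - ε/2) p.2 = ε/2 := by
        rw [Real.dist_eq, abs_of_nonpos] <;> linarith
      have h2 : dist p.1 p.1 = 0 := dist_self _
      show max (dist p.1 p.1) (dist (p.2 - ε/2) p.2) < ε
      rw [h1, h2]
      exact max_lt hε (by linarith)
    have := hmem.2.1; simp only at this; linarith
  · have hmem : ((p.1 + ε/2, p.2) : ℝ × ℝ) ∈ Delta := by
      apply hball
      rw [Metric.mem_ball, Prod.dist_eq]
      have h1 : dist (p.1 + ε/2) p.1 = ε/2 := by
        rw [Real.dist_eq, abs_of_nonneg] <;> linarith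
      have h2 : dist p.2 p.2 = 0 := dist_self _
      show max (dist (p.1 + ε/2) p.1) (dist p.2 p.2) < ε
      rw [h1, h2]
      exact max_lt (by linarith) hε
    have := hmem.2.2; simp only at this; linarith

lemma Hcomp_congr (k₁ k₂ : ℕ → ℕ) :
    ∀ n, (∀ i, 1 ≤ i → i ≤ n → k₁ i = k₂ i) → Hcomp k₁ n = Hcomp k₂ n
  | 0, _ => rfl
  | n + 1, h => by
    rw [Hcomp, Hcomp, Hcomp_congr k₁ k₂ n (fun i h1 h2 => h i h1 (Nat.le_succ_of_le h2)),
      h (n+1) (by omega) le_rfl]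

lemma Hcomp_succ_left (k : ℕ → ℕ) :
    ∀ n, Hcomp k (n + 1) = Hmap (k 1) ∘ Hcomp (fun i => k (i + 1)) n
  | 0 => rfl
  | n + 1 => by
    show Hcomp k (n + 1) ∘ Hmap (k (n + 2)) = _
    rw [Hcomp_succ_left k n]
    rfl

lemma key (c : ℕ) : ∀ a b : ℕ, 0 < c → a + b ≤ c →
    (((a : ℝ)/c, (b : ℝ)/c) ∈ frontier Delta ∨
      ∃ n : ℕ, 1 ≤ n ∧ ∃ k : ℕ → ℕ, (∀ i, 1 ≤ k i) ∧
        ((a : ℝ)/c, (b : ℝ)/c) ∈ Hcomp k n '' frontier Delta) := by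
  induction c using Nat.strong_induction_on with
  | _ c IH =>
  intro a b hc hab
  have hcR : (0:ℝ) < (c:ℝ) := by exact_mod_cast hc
  have hcne : (c:ℝ) ≠ 0 := ne_of_gt hcR
  have hmem : (((a : ℝ)/c, (b : ℝ)/c)) ∈ Delta := by
    refine ⟨by positivity, by positivity, ?_⟩
    rw [← add_div, div_le_one hcR]
    exact_mod_cast hab
  by_cases ha : a = 0
  · exact Or.inl (mem_frontier_Delta _ hmem (Or.inl (by simp [ha])))
  by_cases hb : b = 0
  · exact Or.inl (mem_frontier_Delta _ hmem (Or.inr (Or.inl (by simp [hb]))))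
  by_cases habc : a + b = c
  · refine Or.inl (mem_frontier_Delta _ hmem (Or.inr (Or.inr ?_)))
    simp only
    rw [← add_div, div_eq_one_iff_eq hcne]
    exact_mod_cast habc
  -- interior case
  have ha' : 0 < a := Nat.pos_of_ne_zero ha
  have hb' : 0 < b := Nat.pos_of_ne_zero hb
  have habc' : a + b < c := lt_of_le_of_ne hab habc
  set k : ℕ := (c - a) / b with hkdef
  have hk1 : 1 ≤ k := (Nat.one_le_div_iff hb').mpr (by omega)
  have hkble : k * b ≤ c - a := Nat.div_mul_le_self _ _
  have hmod : k * b + (c - a) % b = c - a := by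
    rw [hkdef, mul_comm]; exact Nat.div_add_mod _ _
  have hmodlt : (c - a) % b < b := Nat.mod_lt _ hb'
  have hkbge : c - a ≤ k * b + b := by omega
  set c' : ℕ := a + b with hc'def
  set a' : ℕ := a + b + k * b - c with ha'def
  have hc'pos : 0 < c' := by omega
  have hc'R : (0:ℝ) < (c':ℝ) := by exact_mod_cast hc'pos
  have hc'ne : (c':ℝ) ≠ 0 := ne_of_gt hc'R
  have hsum : a' + a ≤ c' := by omega
  have hcast : (a' : ℝ) = (a : ℝ) + b + k * b - c := by
    have hle : c ≤ a + b + k * b := by omega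
    rw [ha'def, Nat.cast_sub hle]
    push_cast
    ring
  have hcastc' : (c' : ℝ) = (a : ℝ) + b := by rw [hc'def]; push_cast; ring
  -- the preimage point
  set q : ℝ × ℝ := ((a' : ℝ)/c', (a : ℝ)/c') with hqdef
  have hHq : Hmap k q = ((a : ℝ)/c, (b : ℝ)/c) := by
    have hD : (k : ℝ) * (1 - (a : ℝ)/c') + 1 - (a' : ℝ)/c' = (c : ℝ)/c' := by
      rw [hcast]
      field_simp
      rw [hcastc']
      ring
    simp only [Hmap, hqdef]
    rw [hD]
    have h1 : ((a : ℝ)/c') / ((c : ℝ)/c') = (a : ℝ)/c := by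
      field_simp
    have h2 : (1 - (a : ℝ)/c') / ((c : ℝ)/c') = (b : ℝ)/c := by
      have hx : 1 - (a : ℝ)/c' = (b : ℝ)/c' := by
        field_simp
        rw [hcastc']
        ring
      rw [hx]
      field_simp
    rw [h1, h2]
  rcases IH c' habc' a' a hc'pos hsum with hfront | ⟨n, hn, k', hk', w, hw, hweq⟩
  · right
    refine ⟨1, le_rfl, fun _ => k, fun _ => hk1, q, hfront, ?_⟩
    show (Hcomp (fun _ => k) 0 ∘ Hmap k) q = _
    simpa [Hcomp] using hHq
  · right
    refine ⟨n + 1, by omega,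
      fun i => match i with | 0 => k | 1 => k | (j+2) => k' (j+1), ?_, w, hw, ?_⟩
    · intro i
      rcases i with _ | _ | j
      · exact hk1
      · exact hk1
      · exact hk' _
    · rw [Hcomp_succ_left]
      have hshift : Hcomp
          (fun i => (fun i => match i with | 0 => k | 1 => k | (j+2) => k' (j+1)) (i + 1)) n
          = Hcomp k' n := by
        apply Hcomp_congr
        intro i h1 h2
        rcases i with _ | j
        · omega
        · rfl
      show Hmap k (Hcomp
          (fun i => (fun i => match i with | 0 => k | 1 => k | (j+2) => k' (j+1)) (i + 1)) n w)
          = ((a : ℝ)/c, (b : ℝ)/c)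
      rw [hshift, hweq]
      exact hHq

/-- every point of `Δ` with rational coordinates belongs to
`∂Δ ∪ ⋃_{n≥1} ⋃_{k_1,…,k_n ≥ 1} H_{k_1} ∘ ⋯ ∘ H_{k_n}(∂Δ)`. -/
theorem statement10 (p : ℝ × ℝ) (hp : p ∈ Delta)
    (hx : ∃ qx : ℚ, p.1 = (qx : ℝ)) (hy : ∃ qy : ℚ, p.2 = (qy : ℝ)) :
    p ∈ frontier Delta ∨
      ∃ n : ℕ, 1 ≤ n ∧ ∃ k : ℕ → ℕ, (∀ i, 1 ≤ k i) ∧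
        p ∈ Hcomp k n '' frontier Delta := by
  obtain ⟨qx, hqx⟩ := hx
  obtain ⟨qy, hqy⟩ := hy
  obtain ⟨hp1, hp2, hp3⟩ := hp
  have hqx0 : 0 ≤ qx := by exact_mod_cast hqx ▸ hp1
  have hqy0 : 0 ≤ qy := by exact_mod_cast hqy ▸ hp2
  set a : ℕ := qx.num.toNat * qy.den with hadef
  set b : ℕ := qy.num.toNat * qx.den with hbdef
  set c : ℕ := qx.den * qy.den with hcdef
  have hcpos : 0 < c := Nat.mul_pos qx.pos qy.pos
  have hcR : (0:ℝ) < (c:ℝ) := by exact_mod_cast hcpos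
  have hdx : ((qx.den : ℝ)) ≠ 0 := by exact_mod_cast qx.pos.ne'
  have hdy : ((qy.den : ℝ)) ≠ 0 := by exact_mod_cast qy.pos.ne'
  have hnumx : ((qx.num.toNat : ℕ) : ℝ) = ((qx.num : ℤ) : ℝ) := by
    exact_mod_cast congrArg (Int.cast : ℤ → ℝ)
      (Int.toNat_of_nonneg (Rat.num_nonneg.mpr hqx0))
  have hnumy : ((qy.num.toNat : ℕ) : ℝ) = ((qy.num : ℤ) : ℝ) := by
    exact_mod_cast congrArg (Int.cast : ℤ → ℝ)
      (Int.toNat_of_nonneg (Rat.num_nonneg.mpr hqy0))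
  have hA : (a : ℝ) = ((qx.num : ℤ) : ℝ) * qy.den := by
    rw [hadef, Nat.cast_mul, hnumx]
  have hB : (b : ℝ) = ((qy.num : ℤ) : ℝ) * qx.den := by
    rw [hbdef, Nat.cast_mul, hnumy]
  have hC : (c : ℝ) = (qx.den : ℝ) * qy.den := by
    rw [hcdef, Nat.cast_mul]
  have hxa : p.1 = (a : ℝ)/c := by
    rw [hqx, Rat.cast_def, hA, hC, mul_div_mul_right _ _ hdy]
  have hyb : p.2 = (b : ℝ)/c := by
    rw [hqy, Rat.cast_def, hB, hC, mul_comm (qx.den : ℝ) (qy.den : ℝ),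
      mul_div_mul_right _ _ hdx]
  have hab : a + b ≤ c := by
    have h1 : (a : ℝ)/c + (b : ℝ)/c ≤ 1 := by rw [← hxa, ← hyb]; exact hp3
    rw [← add_div, div_le_one hcR] at h1
    exact_mod_cast h1
  have hpq : p = ((a : ℝ)/c, (b : ℝ)/c) := Prod.ext hxa hyb
  rw [hpq]
  exact key c a b hcpos hab
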